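/- Let σ > 0 and α, r ∈ ℝ with Δ := (σ²/2 − α)² + 2σ²r > 0, and let d₁ < d₂ be the roots of P(d) := (σ²/2)d² + (α − σ²/2)d − r. Let Π : (0,∞) → ℝ be Borel measurable and locally integrable, and suppose there is x₁ₗ > 0 such that Π(x) < 0 for a.e. x ∈ (0, x₁ₗ), Π(x) ≥ 0 for a.e. x ≥ x₁ₗ, and Π is not a.e. zero on (x₁ₗ, ∞). Assume s ↦ s^{−d₂−1} Π(s) is Lebesgue integrable on (w, ∞) for every w > 0. Define γ := inf{ x > 0 : ∃ C > x, ∫_x^C ((C/s)^{d₂} − (C/s)^{d₁}) · Π(s)/s ds ≥ 0 }. If γ > 0, then ∫_γ^∞ s^{−d₂−1} Π(s) ds = 0. -/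

import Mathlib

open MeasureTheory Set

section Stmt14AuxSection
open Filter

namespace Stmt14Aux

lemma integral_neg_of_ae_neg {f : ℝ → ℝ} {s : Set ℝ} (hs : MeasurableSet s)
    (hμ : 0 < volume s) (hi : IntegrableOn f s)
    (hneg : ∀ᵐ x ∂(volume.restrict s), f x < 0) :
    (∫ x in s, f x) < 0 := by
  have hae : 0 ≤ᵐ[volume.restrict s] (-f) := by
    filter_upwards [hneg] with x hx
    simpa using hx.le
  have hsup : 0 < volume (Function.support (-f) ∩ s) := by
    rw [← Measure.restrict_apply' hs]
    have hnull : volume.restrict s ((Function.support (-f))ᶜ) = 0 := by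
      refine measure_mono_null ?_ (ae_iff.1 hneg)
      intro x hx
      simp only [Function.mem_support, Pi.neg_apply, neg_eq_zero, mem_compl_iff,
        not_not, mem_setOf_eq] at hx ⊢
      simp [hx]
    have hle := measure_union_le (μ := volume.restrict s)
      (Function.support (-f)) ((Function.support (-f))ᶜ)
    rw [union_compl_self, hnull, add_zero, Measure.restrict_apply_univ] at hle
    exact lt_of_lt_of_le hμ hle
  have h1 : 0 < ∫ x in s, (-f) x :=
    (setIntegral_pos_iff_support_of_nonneg_ae hae hi.neg).2 hsup
  have h2 : ∫ x in s, (-f) x = -∫ x in s, f x := integral_neg f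
  linarith

lemma integral_kpow {k : ℝ} (hk : 0 < k) {s C : ℝ} (hs : 0 < s) (hsC : s ≤ C) :
    ∫ t in Ioc s C, k * t ^ (k - 1) = C ^ k - s ^ k := by
  rw [← intervalIntegral.integral_of_le hsC, intervalIntegral.integral_const_mul,
    integral_rpow (Or.inl (by linarith))]
  have hne : k - 1 + 1 = k := by ring
  rw [hne]
  field_simp

lemma fubini_id {f : ℝ → ℝ} (hfm : Measurable f) {k x C : ℝ} (hk : 0 < k)
    (hx : 0 < x) (hxC : x < C) (hfi : IntegrableOn f (Ioc x C)) :
    ∫ s in Ioc x C, (C ^ k - s ^ k) * f s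
      = ∫ t in Ioc x C, k * t ^ (k - 1) * ∫ s in Ioc x t, f s := by
  set μ := volume.restrict (Ioc x C) with hμ
  haveI : IsFiniteMeasure μ := by
    constructor
    rw [hμ, Measure.restrict_apply_univ]
    exact measure_Ioc_lt_top
  set g : ℝ → ℝ → ℝ := fun s t => {p : ℝ × ℝ | p.1 < p.2}.indicator
      (fun p => f p.1 * (k * p.2 ^ (k - 1))) (s, t) with hg
  set M : ℝ := max (x ^ (k - 1)) (C ^ (k - 1)) with hM
  have hbound : ∀ t ∈ Ioc x C, t ^ (k - 1) ≤ M := by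
    intro t ht
    rcases le_or_gt 0 (k - 1) with h | h
    · exact le_max_of_le_right (Real.rpow_le_rpow (by linarith [ht.1]) ht.2 h)
    · exact le_max_of_le_left (Real.rpow_le_rpow_of_nonpos hx ht.1.le h.le)
  have hgm : Measurable (Function.uncurry g) := by
    apply Measurable.indicator
    · exact (hfm.comp measurable_fst).mul
        (measurable_const.mul (measurable_snd.pow_const _))
    · exact measurableSet_lt measurable_fst measurable_snd
  have hgi : Integrable (Function.uncurry g) (μ.prod μ) := by
    refine Integrable.mono' (g := fun p : ℝ × ℝ => |f p.1| * (k * M))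
      ?_ hgm.aestronglyMeasurable ?_
    · exact hfi.abs.mul_prod (integrable_const _)
    · have hprod : μ.prod μ = (volume.prod volume).restrict ((Ioc x C) ×ˢ (Ioc x C)) := by
        rw [hμ, Measure.prod_restrict]
      rw [hprod]
      filter_upwards [ae_restrict_mem (measurableSet_Ioc.prod measurableSet_Ioc)] with p hp
      have h1 : ‖Function.uncurry g p‖ ≤ ‖f p.1 * (k * p.2 ^ (k - 1))‖ := by
        have : Function.uncurry g p
            = {q : ℝ × ℝ | q.1 < q.2}.indicator (fun q => f q.1 * (k * q.2 ^ (k - 1))) p := rfl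
        rw [this]
        exact norm_indicator_le_norm_self _ _
      refine h1.trans ?_
      rw [norm_mul, Real.norm_eq_abs, Real.norm_eq_abs]
      have h2 : |k * p.2 ^ (k - 1)| ≤ k * M := by
        rw [abs_of_nonneg (mul_nonneg hk.le (Real.rpow_nonneg (hx.trans hp.2.1).le _))]
        exact mul_le_mul_of_nonneg_left (hbound p.2 hp.2) hk.le
      exact mul_le_mul_of_nonneg_left h2 (abs_nonneg _)
  have h1 : ∀ s ∈ Ioc x C, (∫ t, g s t ∂μ) = (C ^ k - s ^ k) * f s := by
    intro s hs
    have he : (fun t => g s t) = (Ioi s).indicator (fun t => f s * (k * t ^ (k - 1))) := by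
      funext t
      simp only [hg, Set.indicator_apply, mem_setOf_eq, mem_Ioi]
    rw [he, integral_indicator measurableSet_Ioi, hμ,
      Measure.restrict_restrict measurableSet_Ioi]
    have hset : Ioi s ∩ Ioc x C = Ioc s C := by
      ext t
      simp only [mem_inter_iff, mem_Ioi, mem_Ioc]
      exact ⟨fun h => ⟨h.1, h.2.2⟩, fun h => ⟨h.1, hs.1.trans h.1, h.2⟩⟩
    rw [hset, integral_const_mul, integral_kpow hk (hx.trans hs.1) hs.2]
    ring
  have h2 : ∀ t ∈ Ioc x C, (∫ s, g s t ∂μ) = k * t ^ (k - 1) * ∫ s in Ioc x t, f s := by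
    intro t ht
    have he : (fun s => g s t) = (Iio t).indicator (fun s => f s * (k * t ^ (k - 1))) := by
      funext s
      simp only [hg, Set.indicator_apply, mem_setOf_eq, mem_Iio]
    rw [he, integral_indicator measurableSet_Iio, hμ,
      Measure.restrict_restrict measurableSet_Iio]
    have hset : Iio t ∩ Ioc x C = Ioo x t := by
      ext s
      simp only [mem_inter_iff, mem_Iio, mem_Ioo, mem_Ioc]
      exact ⟨fun h => ⟨h.2.1, h.1⟩, fun h => ⟨h.2, h.1, (h.2.le.trans ht.2)⟩⟩
    rw [hset, integral_mul_const, ← integral_Ioc_eq_integral_Ioo]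
    ring
  calc ∫ s in Ioc x C, (C ^ k - s ^ k) * f s
      = ∫ s, (∫ t, g s t ∂μ) ∂μ :=
        (setIntegral_congr_fun measurableSet_Ioc (fun s hs => (h1 s hs).symm))
    _ = ∫ t, (∫ s, g s t ∂μ) ∂μ := integral_integral_swap hgi
    _ = ∫ t in Ioc x C, k * t ^ (k - 1) * ∫ s in Ioc x t, f s :=
        setIntegral_congr_fun measurableSet_Ioc h2

end Stmt14Aux

open Stmt14Aux
open Filter in

/-- If the profit function `Π` is negative a.e. near `0`, nonnegative a.e. beyond `x₁ₗ`,
not a.e. zero there, and `s ↦ s^{−d₂−1} Π(s)` is integrable on every `(w,∞)`, then the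
threshold `γ` (when strictly positive) satisfies the integral equation
`∫_γ^∞ s^{−d₂−1} Π(s) ds = 0`. -/
theorem stmt_14 (σ α r : ℝ) (hσ : 0 < σ)
    (hΔ : 0 < (σ ^ 2 / 2 - α) ^ 2 + 2 * σ ^ 2 * r)
    (d₁ d₂ : ℝ)
    (hd₁ : d₁ = ((σ ^ 2 / 2 - α) - Real.sqrt ((σ ^ 2 / 2 - α) ^ 2 + 2 * σ ^ 2 * r)) / σ ^ 2)
    (hd₂ : d₂ = ((σ ^ 2 / 2 - α) + Real.sqrt ((σ ^ 2 / 2 - α) ^ 2 + 2 * σ ^ 2 * r)) / σ ^ 2)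
    (Pf : ℝ → ℝ) (hPm : Measurable Pf)
    (hloc : LocallyIntegrableOn Pf (Set.Ioi 0))
    (x₁ : ℝ) (hx₁ : 0 < x₁)
    (hneg : ∀ᵐ x ∂(volume.restrict (Set.Ioo 0 x₁)), Pf x < 0)
    (hpos : ∀ᵐ x ∂(volume.restrict (Set.Ici x₁)), 0 ≤ Pf x)
    (hne : ¬ (∀ᵐ x ∂(volume.restrict (Set.Ioi x₁)), Pf x = 0))
    (hint : ∀ w : ℝ, 0 < w →
      IntegrableOn (fun s : ℝ => s ^ (-d₂ - 1) * Pf s) (Set.Ioi w))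
    (γ : ℝ)
    (hγ : γ = sInf {x : ℝ | 0 < x ∧ ∃ C, x < C ∧
      0 ≤ ∫ s in x..C, ((C / s) ^ d₂ - (C / s) ^ d₁) * Pf s / s})
    (hγpos : 0 < γ) :
    ∫ s in Set.Ioi γ, s ^ (-d₂ - 1) * Pf s = 0 := by
  set f : ℝ → ℝ := fun s => s ^ (-d₂ - 1) * Pf s with hfdef
  have hfm : Measurable f := (measurable_id.pow_const _).mul hPm
  set k : ℝ := d₂ - d₁ with hkdef
  have hk : 0 < k := by
    have hs : 0 < Real.sqrt ((σ ^ 2 / 2 - α) ^ 2 + 2 * σ ^ 2 * r) := Real.sqrt_pos.2 hΔ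
    have hσ2 : 0 < σ ^ 2 := by positivity
    rw [hkdef, hd₂, hd₁, ← sub_div]
    exact div_pos (by linarith) hσ2
  have hfiIoc : ∀ a b : ℝ, 0 < a → IntegrableOn f (Ioc a b) :=
    fun a b ha => (hint a ha).mono_set Ioc_subset_Ioi_self
  have hfiIcc : ∀ a b : ℝ, 0 < a → IntegrableOn f (Icc a b) := by
    intro a b ha
    refine (hint (a / 2) (by linarith)).mono_set ?_
    intro y hy
    exact lt_of_lt_of_le (by linarith) hy.1
  set F : ℝ → ℝ := fun y => ∫ s in Ioi y, f s with hFdef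
  have hsplit : ∀ a t : ℝ, 0 < a → a ≤ t → F a = (∫ s in Ioc a t, f s) + F t := by
    intro a t ha hat
    simp only [hFdef]
    rw [← Ioc_union_Ioi_eq_Ioi hat]
    exact setIntegral_union (Ioc_disjoint_Ioi le_rfl) measurableSet_Ioi
      (hfiIoc a t ha) (hint t (ha.trans_le hat))
  have hFnonneg : ∀ t, x₁ ≤ t → 0 ≤ F t := by
    intro t ht
    apply setIntegral_nonneg_of_ae_restrict
    have hsub : Ioi t ⊆ Ici x₁ := fun s hs => le_of_lt (lt_of_le_of_lt ht hs)
    have h1 := ae_restrict_of_ae_restrict_of_subset hsub hpos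
    filter_upwards [h1, ae_restrict_mem measurableSet_Ioi] with s h2 h3
    exact mul_nonneg (Real.rpow_pos_of_pos (lt_of_lt_of_le hx₁ (ht.trans h3.le)) _).le h2
  have hfnegae : ∀ a t : ℝ, 0 < a → t ≤ x₁ →
      ∀ᵐ s ∂(volume.restrict (Ioc a t)), f s < 0 := by
    intro a t ha ht
    rw [← Measure.restrict_congr_set Ioo_ae_eq_Ioc]
    have hsub : Ioo a t ⊆ Ioo 0 x₁ := Ioo_subset_Ioo ha.le ht
    have h1 := ae_restrict_of_ae_restrict_of_subset hsub hneg
    filter_upwards [h1, ae_restrict_mem measurableSet_Ioo] with s h2 h3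
    exact mul_neg_of_pos_of_neg (Real.rpow_pos_of_pos (ha.trans h3.1) _) h2
  have hAneg : ∀ x t : ℝ, 0 < x → F x < 0 → x < t → (∫ s in Ioc x t, f s) < 0 := by
    intro x t hx hF hxt
    rcases le_or_gt t x₁ with h | h
    · refine integral_neg_of_ae_neg measurableSet_Ioc ?_ (hfiIoc x t hx) (hfnegae x t hx h)
      rw [Real.volume_Ioc]
      exact ENNReal.ofReal_pos.2 (by linarith)
    · have hsp := hsplit x t hx hxt.le
      have h2 := hFnonneg t h.le
      linarith
  -- continuity of the primitive and integrability of the J-integrand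
  have hprimcont : ∀ x b : ℝ, 0 < x →
      ContinuousOn (fun t => ∫ s in Ioc x t, f s) (Icc x b) :=
    fun x b hx => intervalIntegral.continuousOn_primitive (hfiIcc x b hx)
  have hJint : ∀ x b : ℝ, 0 < x →
      IntegrableOn (fun t => k * t ^ (k - 1) * ∫ s in Ioc x t, f s) (Icc x b) := by
    intro x b hx
    refine ContinuousOn.integrableOn_compact isCompact_Icc ?_
    refine ContinuousOn.mul ?_ (hprimcont x b hx)
    refine continuousOn_const.mul ?_
    intro t ht
    exact (Real.continuousAt_rpow_const t _ (Or.inl (lt_of_lt_of_le hx ht.1).ne')).continuousWithinAt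
  have hkpowint : ∀ a b : ℝ, 0 < a → IntegrableOn (fun t => k * t ^ (k - 1)) (Icc a b) := by
    intro a b ha
    refine ContinuousOn.integrableOn_compact isCompact_Icc ?_
    refine continuousOn_const.mul ?_
    intro t ht
    exact (Real.continuousAt_rpow_const t _ (Or.inl (lt_of_lt_of_le ha ht.1).ne')).continuousWithinAt
  -- the original integral in terms of the kernel identity
  have horig : ∀ x C : ℝ, 0 < x → x < C →
      (∫ s in x..C, ((C / s) ^ d₂ - (C / s) ^ d₁) * Pf s / s)
        = C ^ d₁ * ∫ t in Ioc x C, k * t ^ (k - 1) * ∫ s in Ioc x t, f s := by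
    intro x C hx hxC
    have hC0 : 0 < C := hx.trans hxC
    rw [intervalIntegral.integral_of_le hxC.le,
      ← fubini_id hfm hk hx hxC (hfiIoc x C hx), ← integral_const_mul]
    refine setIntegral_congr_fun measurableSet_Ioc ?_
    intro s hs
    have hs0 : 0 < s := hx.trans hs.1
    have e1 : s ^ (-d₂ - 1 : ℝ) = (s ^ d₂ * s)⁻¹ := by
      rw [show -d₂ - 1 = -(d₂ + 1) by ring, Real.rpow_neg hs0.le,
        Real.rpow_add hs0, Real.rpow_one]
    have e2 : C ^ (k : ℝ) = C ^ d₂ / C ^ d₁ := by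
      rw [hkdef, Real.rpow_sub hC0]
    have e3 : s ^ (k : ℝ) = s ^ d₂ / s ^ d₁ := by
      rw [hkdef, Real.rpow_sub hs0]
    simp only [hfdef]
    rw [Real.div_rpow hC0.le hs0.le, Real.div_rpow hC0.le hs0.le, e1, e2, e3]
    have h1 : s ^ (d₁ : ℝ) ≠ 0 := (Real.rpow_pos_of_pos hs0 _).ne'
    have h2 : s ^ (d₂ : ℝ) ≠ 0 := (Real.rpow_pos_of_pos hs0 _).ne'
    have h3 : C ^ (d₁ : ℝ) ≠ 0 := (Real.rpow_pos_of_pos hC0 _).ne'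
    field_simp
  -- Part (a): if F x < 0 then no witness C works
  have hnotin : ∀ x : ℝ, 0 < x → F x < 0 → ∀ C, x < C →
      (∫ s in x..C, ((C / s) ^ d₂ - (C / s) ^ d₁) * Pf s / s) < 0 := by
    intro x hx hF C hxC
    rw [horig x C hx hxC]
    refine mul_neg_of_pos_of_neg (Real.rpow_pos_of_pos (hx.trans hxC) _) ?_
    refine integral_neg_of_ae_neg measurableSet_Ioc ?_
      ((hJint x C hx).mono_set Ioc_subset_Icc_self) ?_
    · rw [Real.volume_Ioc]
      exact ENNReal.ofReal_pos.2 (by linarith)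
    · filter_upwards [ae_restrict_mem measurableSet_Ioc] with t ht
      exact mul_neg_of_pos_of_neg
        (mul_pos hk (Real.rpow_pos_of_pos (hx.trans ht.1) _))
        (hAneg x t hx hF ht.1)
  -- Part (b): if F x > 0 then x belongs to the candidate set
  have hmem : ∀ x : ℝ, 0 < x → 0 < F x → (0 < x ∧ ∃ C, x < C ∧
      0 ≤ ∫ s in x..C, ((C / s) ^ d₂ - (C / s) ^ d₁) * Pf s / s) := by
    intro x hx hF
    refine ⟨hx, ?_⟩
    have htend : Tendsto F atTop (nhds 0) := by
      have h1 : Tendsto (fun t => ∫ s in x..t, f s) atTop (nhds (F x)) :=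
        MeasureTheory.intervalIntegral_tendsto_integral_Ioi x (hint x hx) tendsto_id
      have h2 : ∀ᶠ t in atTop, F x - ∫ s in x..t, f s = F t := by
        filter_upwards [eventually_ge_atTop x] with t ht
        rw [intervalIntegral.integral_of_le ht]
        have := hsplit x t hx ht
        linarith
      have h3 : Tendsto (fun t => F x - ∫ s in x..t, f s) atTop (nhds (F x - F x)) :=
        tendsto_const_nhds.sub h1
      rw [sub_self] at h3
      exact h3.congr' h2
    have hev : ∀ᶠ t in atTop, F t ≤ F x / 2 :=
      (htend.eventually_lt_const (by linarith : (0:ℝ) < F x / 2)).mono fun t h => h.le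
    obtain ⟨T₀, hT₀⟩ := eventually_atTop.1 hev
    set T : ℝ := max T₀ (max x x₁) + 1 with hTdef
    have hxT : x < T := by
      have : x ≤ max T₀ (max x x₁) := le_max_of_le_right (le_max_left _ _)
      linarith
    have hT0 : 0 < T := hx.trans hxT
    have hTub : ∀ t, T ≤ t → F t ≤ F x / 2 := by
      intro t ht
      refine hT₀ t ?_
      have : T₀ ≤ max T₀ (max x x₁) := le_max_left _ _
      linarith
    set G : ℝ → ℝ := fun t => k * t ^ (k - 1) * ∫ s in Ioc x t, f s with hGdef
    set K : ℝ := ∫ t in Ioc x T, G t with hKdef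
    obtain ⟨C, hCk, hTC⟩ :=
      (((tendsto_rpow_atTop hk).eventually_ge_atTop (T ^ k - 2 * K / F x)).and
        (eventually_gt_atTop T)).exists
    refine ⟨C, hxT.trans hTC, ?_⟩
    rw [horig x C hx (hxT.trans hTC)]
    refine mul_nonneg (Real.rpow_pos_of_pos (hx.trans (hxT.trans hTC)) _).le ?_
    have hsplitJ : (∫ t in Ioc x C, G t) = K + ∫ t in Ioc T C, G t := by
      rw [hKdef, ← setIntegral_union (Ioc_disjoint_Ioc_of_le le_rfl) measurableSet_Ioc
        ((hJint x T hx).mono_set Ioc_subset_Icc_self)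
        (((hJint x C hx).mono_set (fun t ht => ⟨hxT.le.trans ht.1.le, ht.2⟩)))]
      rw [Ioc_union_Ioc_eq_Ioc hxT.le hTC.le]
    have hJ2 : (F x / 2) * (C ^ k - T ^ k) ≤ ∫ t in Ioc T C, G t := by
      have hmono : (∫ t in Ioc T C, k * t ^ (k - 1) * (F x / 2)) ≤ ∫ t in Ioc T C, G t := by
        have hlhs : IntegrableOn (fun t => k * t ^ (k - 1) * (F x / 2)) (Icc T C) :=
          (hkpowint T C hT0).mul_const _
        refine setIntegral_mono_on
          (hlhs.mono_set Ioc_subset_Icc_self)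
          ((hJint x C hx).mono_set (fun t ht => ⟨hxT.le.trans ht.1.le, ht.2⟩))
          measurableSet_Ioc ?_
        intro t ht
        have hA : F x / 2 ≤ ∫ s in Ioc x t, f s := by
          have hs1 := hsplit x t hx (hxT.le.trans ht.1.le)
          have hs2 := hTub t ht.1.le
          linarith
        exact mul_le_mul_of_nonneg_left hA
          (mul_pos hk (Real.rpow_pos_of_pos (hT0.trans ht.1) _)).le
      calc (F x / 2) * (C ^ k - T ^ k)
          = ∫ t in Ioc T C, k * t ^ (k - 1) * (F x / 2) := by
            rw [integral_mul_const, integral_kpow hk hT0 hTC.le]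
            ring
        _ ≤ _ := hmono
    have hKbound : -K ≤ (F x / 2) * (C ^ k - T ^ k) := by
      have h' : -(2 * K) / F x ≤ C ^ k - T ^ k := by
        have hrw : -(2 * K) / F x = -(2 * K / F x) := by ring
        rw [hrw]; linarith
      have h'' := mul_le_mul_of_nonneg_left h' (by linarith : (0:ℝ) ≤ F x / 2)
      have he : (F x / 2) * (-(2 * K) / F x) = -K := by
        have hF0 : F x ≠ 0 := by linarith
        field_simp
      linarith
    have : (0:ℝ) ≤ K + ∫ t in Ioc T C, G t := by linarith
    rw [hsplitJ]
    exact this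
  -- F x₁ > 0
  have hFx₁ : 0 < F x₁ := by
    have hae : 0 ≤ᵐ[volume.restrict (Ioi x₁)] f := by
      have h1 := ae_restrict_of_ae_restrict_of_subset Ioi_subset_Ici_self hpos
      filter_upwards [h1, ae_restrict_mem measurableSet_Ioi] with s h2 h3
      exact mul_nonneg (Real.rpow_pos_of_pos (hx₁.trans h3) _).le h2
    simp only [hFdef]
    rw [setIntegral_pos_iff_support_of_nonneg_ae hae (hint x₁ hx₁)]
    by_contra hcon
    push_neg at hcon
    have h0 : volume (Function.support f ∩ Ioi x₁) = 0 := le_antisymm hcon (by positivity)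
    apply hne
    have hf0 : ∀ᵐ s ∂(volume.restrict (Ioi x₁)), f s = 0 := by
      rw [ae_iff]
      rw [Measure.restrict_apply' measurableSet_Ioi]
      exact h0
    filter_upwards [hf0, ae_restrict_mem measurableSet_Ioi] with s h1 h2
    have hs0 : (0:ℝ) < s := hx₁.trans h2
    rcases mul_eq_zero.1 h1 with h | h
    · exact absurd h (Real.rpow_pos_of_pos hs0 _).ne'
    · exact h
  -- set-theoretic facts about the candidate set
  have hbdd : BddBelow {x : ℝ | 0 < x ∧ ∃ C, x < C ∧
      0 ≤ ∫ s in x..C, ((C / s) ^ d₂ - (C / s) ^ d₁) * Pf s / s} :=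
    ⟨0, fun y hy => hy.1.le⟩
  have hSne : {x : ℝ | 0 < x ∧ ∃ C, x < C ∧
      0 ≤ ∫ s in x..C, ((C / s) ^ d₂ - (C / s) ^ d₁) * Pf s / s}.Nonempty :=
    ⟨x₁, hmem x₁ hx₁ hFx₁⟩
  have hlow : ∀ z, (0 < z ∧ ∃ C, z < C ∧
      0 ≤ ∫ s in z..C, ((C / s) ^ d₂ - (C / s) ^ d₁) * Pf s / s) → γ ≤ z := by
    intro z hz
    rw [hγ]
    exact csInf_le hbdd hz
  -- continuity of F at γ
  have hFcont : ContinuousAt F γ := by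
    have hw : 0 < γ / 2 := by linarith
    have h1 : ContinuousOn (fun y => F (γ / 2) - ∫ s in Ioc (γ / 2) y, f s)
        (Icc (γ / 2) (γ + 1)) :=
      continuousOn_const.sub (hprimcont (γ / 2) (γ + 1) hw)
    have h3 : ContinuousOn F (Icc (γ / 2) (γ + 1)) := by
      refine h1.congr ?_
      intro y hy
      have := hsplit (γ / 2) y hw hy.1
      linarith
    exact h3.continuousAt (Icc_mem_nhds (by linarith) (by linarith))
  rcases lt_trichotomy (F γ) 0 with hlt | heq | hgt
  · exfalso
    have hev : ∀ᶠ y in nhds γ, F y < 0 := hFcont.eventually_lt_const hlt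
    obtain ⟨δ, hδ, hball⟩ := Metric.eventually_nhds_iff.1 hev
    have hslt : sInf {x : ℝ | 0 < x ∧ ∃ C, x < C ∧
        0 ≤ ∫ s in x..C, ((C / s) ^ d₂ - (C / s) ^ d₁) * Pf s / s} < γ + δ := by
      rw [← hγ]; linarith
    obtain ⟨z, hzS, hzlt⟩ := (csInf_lt_iff hbdd hSne).1 hslt
    have hγz : γ ≤ z := hlow z hzS
    have hFz : F z < 0 := by
      refine hball ?_
      rw [Real.dist_eq, abs_of_nonneg (by linarith)]
      linarith
    obtain ⟨hz0, C, hzC, hge⟩ := hzS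
    exact absurd hge (not_le.2 (hnotin z hz0 hFz C hzC))
  · exact heq
  · exfalso
    have hev : ∀ᶠ y in nhds γ, 0 < F y := hFcont.eventually_const_lt hgt
    obtain ⟨δ, hδ, hball⟩ := Metric.eventually_nhds_iff.1 hev
    set z : ℝ := max (γ / 2) (γ - δ / 2) with hz
    have hz0 : 0 < z := lt_of_lt_of_le (by linarith) (le_max_left _ _)
    have hzγ : z < γ := max_lt (by linarith) (by linarith)
    have hzd : γ - δ / 2 ≤ z := le_max_right _ _
    have hdist : dist z γ < δ := by
      rw [Real.dist_eq, abs_of_nonpos (by linarith)]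
      linarith
    have hFz : 0 < F z := hball hdist
    have := hlow z (hmem z hz0 hFz)
    linarith

end Stmt14AuxSection
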